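/- Correctness of the SSTL-to-LTL_P translation (Theorem 2): let w_d be an SSTL trace and let σ be the same sequence of states viewed as an LTL_P trace (so position j coincides with tick k). Let τ be the translation that maps atoms to the corresponding state predicates, commutes with negation and conjunction, maps unbounded until to LTL until, and maps each bounded operator evaluated at an entry position j₀ using the guard within[a,b](k) := (j₀ + a ≤ k ≤ j₀ + b): τ(φ₁ U_{[a,b]} φ₂) := τ(φ₁) U (τ(φ₂) ∧ within[a,b]), τ(◇_{[a,b]}φ) := ◇(τ(φ) ∧ within[a,b]), τ(□_{[a,b]}φ) := □(within[a,b] → τ(φ)). Then for every SSTL formula φ and every tick k, (w_d,k) ⊨ φ if and only if (σ,k) ⊨ τ(φ). -/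
import Mathlib


/-- SSTL formulas: `⊤ | (x_i ≥ 0) | ¬φ | φ₁ ∧ φ₂ | φ₁ U_{[a,b]} φ₂` with natural
interval endpoints. -/
inductive SSTLFormula (n : ℕ) : Type
  | top : SSTLFormula n
  | atom : Fin n → SSTLFormula n
  | not : SSTLFormula n → SSTLFormula n
  | and : SSTLFormula n → SSTLFormula n → SSTLFormula n
  | untl : ℕ → ℕ → SSTLFormula n → SSTLFormula n → SSTLFormula n

/-- Boolean semantics of SSTL over a discrete trace `w_d : ℕ → (Fin n → ℝ)`. -/
def SSTLSat {n : ℕ} (w_d : ℕ → Fin n → ℝ) : ℕ → SSTLFormula n → Prop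
  | _, .top => True
  | k, .atom i => w_d k i ≥ 0
  | k, .not φ => ¬ SSTLSat w_d k φ
  | k, .and φ₁ φ₂ => SSTLSat w_d k φ₁ ∧ SSTLSat w_d k φ₂
  | k, .untl a b φ₁ φ₂ => ∃ k' : ℕ, k + a ≤ k' ∧ k' ≤ k + b ∧ SSTLSat w_d k' φ₂ ∧
      ∀ k'' : ℕ, k ≤ k'' → k'' < k' → SSTLSat w_d k'' φ₁

/-- LTL_P formulas over states `Fin n → ℝ`.  Atoms are predicates over the current
position (the tick counter, an LTL_P state variable) and the current state.  The
constructor `entry` captures the current position `j₀` at which a time-bounded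
obligation begins, making it available to the guard `within[a,b]`. -/
inductive LTLPFormula (n : ℕ) : Type
  | atom : (ℕ → (Fin n → ℝ) → Prop) → LTLPFormula n
  | not : LTLPFormula n → LTLPFormula n
  | and : LTLPFormula n → LTLPFormula n → LTLPFormula n
  | or : LTLPFormula n → LTLPFormula n → LTLPFormula n
  | next : LTLPFormula n → LTLPFormula n
  | untl : LTLPFormula n → LTLPFormula n → LTLPFormula n
  | entry : (ℕ → LTLPFormula n) → LTLPFormula n

/-- Semantics of LTL_P over a trace `σ : ℕ → (Fin n → ℝ)` at position `j`. -/
def LTLPSat {n : ℕ} (σ : ℕ → Fin n → ℝ) : ℕ → LTLPFormula n → Prop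
  | j, .atom p => p j (σ j)
  | j, .not φ => ¬ LTLPSat σ j φ
  | j, .and φ₁ φ₂ => LTLPSat σ j φ₁ ∧ LTLPSat σ j φ₂
  | j, .or φ₁ φ₂ => LTLPSat σ j φ₁ ∨ LTLPSat σ j φ₂
  | j, .next φ => LTLPSat σ (j + 1) φ
  | j, .untl φ₁ φ₂ => ∃ k : ℕ, j ≤ k ∧ LTLPSat σ k φ₂ ∧
      ∀ l : ℕ, j ≤ l → l < k → LTLPSat σ l φ₁
  | j, .entry f => LTLPSat σ j (f j)

/-- The guard `within[a,b]` relative to the entry position `j₀`: it holds at position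
`k` iff `j₀ + a ≤ k ≤ j₀ + b`. -/
def within {n : ℕ} (j₀ a b : ℕ) : LTLPFormula n :=
  .atom (fun k _ => j₀ + a ≤ k ∧ k ≤ j₀ + b)

/-- The translation `τ` from SSTL to LTL_P: atoms map to the corresponding state
predicates, it commutes with negation and conjunction, and the bounded until,
evaluated at an entry position `j₀`, is mapped to
`τ(φ₁) U (τ(φ₂) ∧ within[a,b])` (from which the bounded-eventually and
bounded-always translations are derived). -/
def sstlToLTLP {n : ℕ} : SSTLFormula n → LTLPFormula n
  | .top => .atom (fun _ _ => True)
  | .atom i => .atom (fun _ s => s i ≥ 0)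
  | .not φ => .not (sstlToLTLP φ)
  | .and φ₁ φ₂ => .and (sstlToLTLP φ₁) (sstlToLTLP φ₂)
  | .untl a b φ₁ φ₂ =>
      .entry (fun j₀ => .untl (sstlToLTLP φ₁) (.and (sstlToLTLP φ₂) (within j₀ a b)))

/-- **Correctness of the SSTL-to-LTL_P translation (Theorem 2).**  Let `w_d` be an
SSTL trace and let `σ` be the same sequence of states viewed as an LTL_P trace (so
position `j` coincides with tick `k`).  Then for every SSTL formula `φ` and every tick
`k`, `(w_d,k) ⊨ φ` iff `(σ,k) ⊨ τ(φ)`. -/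
theorem sstl_to_ltlp_correctness {n : ℕ} (w_d : ℕ → Fin n → ℝ)
    (φ : SSTLFormula n) (k : ℕ) :
    SSTLSat w_d k φ ↔ LTLPSat w_d k (sstlToLTLP φ) := by
  induction φ generalizing k with
  | top => simp [SSTLSat, sstlToLTLP, LTLPSat]
  | atom i => simp [SSTLSat, sstlToLTLP, LTLPSat]
  | not φ ih => simp [SSTLSat, sstlToLTLP, LTLPSat, ih]
  | and φ₁ φ₂ ih₁ ih₂ => simp [SSTLSat, sstlToLTLP, LTLPSat, ih₁, ih₂]
  | untl a b φ₁ φ₂ ih₁ ih₂ =>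
    simp only [SSTLSat, sstlToLTLP, LTLPSat, within]
    constructor
    · rintro ⟨k', h1, h2, h3, h4⟩
      exact ⟨k', le_trans (Nat.le_add_right k a) h1, ⟨(ih₂ k').mp h3, h1, h2⟩,
        fun l hl hl' => (ih₁ l).mp (h4 l hl hl')⟩
    · rintro ⟨k', _, ⟨h3, h1, h2⟩, h4⟩
      exact ⟨k', h1, h2, (ih₂ k').mpr h3,
        fun l hl hl' => (ih₁ l).mpr (h4 l hl hl')⟩
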